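/- Let H(x,y) = y²/2 + x²/2 + x⁴/4. Then x⁴ y dx = (4/7·H − 8/7·x²)·y dx + (6/7)·x y dH − d((2/7)·x y³) as polynomial 1-forms on ℝ². -/

import Mathlib

/-- partial derivative in the first variable -/
noncomputable def pdx (F : ℝ → ℝ → ℝ) (x y : ℝ) : ℝ := deriv (fun t => F t y) x

/-- partial derivative in the second variable -/
noncomputable def pdy (F : ℝ → ℝ → ℝ) (x y : ℝ) : ℝ := deriv (fun t => F x t) y

noncomputable def H (x y : ℝ) : ℝ := y^2/2 + x^2/2 + x^4/4

/-- (i2):  x⁴y dx = (4/7·H − 8/7·x²)·y dx + (6/7)·xy·dH − d((2/7)·xy³) -/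
theorem decomposition_i2 : ∀ x y : ℝ,
    x^4 * y = (4/7 * H x y - 8/7 * x^2) * y + 6/7 * (x*y) * pdx H x y
      - pdx (fun x y => 2/7 * x * y^3) x y
  ∧ (0 : ℝ) = 6/7 * (x*y) * pdy H x y - pdy (fun x y => 2/7 * x * y^3) x y := by
  intro x y
  have h1 : pdx H x y = x + x^3 := by
    simp only [pdx, H]
    rw [deriv_fun_add, deriv_fun_add] <;>
      simp [deriv_div_const, differentiable_pow, Differentiable.add,
        Differentiable.div_const]
  have h2 : pdy H x y = y := by
    simp only [pdy, H]
    rw [deriv_fun_add] <;> simp [deriv_div_const]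
  have h3 : pdx (fun x y => 2/7 * x * y^3) x y = 2/7 * y^3 := by
    simp only [pdx]
    have : (fun t : ℝ => 2/7 * t * y^3) = fun t => (2/7 * y^3) * t := by
      funext t; ring
    rw [this, deriv_const_mul_field, deriv_id'']
    ring
  have h4 : pdy (fun x y => 2/7 * x * y^3) x y = 6/7 * x * y^2 := by
    simp only [pdy]
    rw [deriv_const_mul _ (differentiable_pow 3).differentiableAt]
    simp
    ring
  rw [h1, h2, h3, h4, H]
  constructor <;> ring
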